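/- arXiv:1608.05518 — 2 statements merged into one kernel-verified Lean document; each statement's English description precedes it below -/
import Mathlib

section
/- In the setting of the previous lemma (P₁ = (I 0), P₂ = (A b) a camera, subset σ and vectors v_i as there), if in addition b ≠ 0, then the finite camera P₂' and points v_i' ∈ ℝ³ realizing the finite reconstruction can be chosen so that P₁ and P₂' are non-coincident cameras. -/
open Matrix

noncomputable section

/-- For `u ∈ ℝⁿ`, `hat u = (u, 1)ᵀ ∈ ℝⁿ⁺¹`. -/
def hat {n : ℕ} (u : Fin n → ℝ) : Fin (n + 1) → ℝ := Fin.snoc u 1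

/-- The 3×4 matrix `(A b)` with left 3×3 block `A` and last column `b`. -/
def cam (A : Matrix (Fin 3) (Fin 3) ℝ) (b : Fin 3 → ℝ) : Matrix (Fin 3) (Fin 4) ℝ :=
  Matrix.of fun i => Fin.snoc (A i) (b i)

/-- The left 3×3 block of a 3×4 matrix. -/
def leftBlock (P : Matrix (Fin 3) (Fin 4) ℝ) : Matrix (Fin 3) (Fin 3) ℝ :=
  P.submatrix id Fin.castSucc

/-- A (projective) camera is a real 3×4 matrix of rank 3. -/
def IsCamera (P : Matrix (Fin 3) (Fin 4) ℝ) : Prop := P.rank = 3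

/-- A finite camera: the left 3×3 block is nonsingular. -/
def IsFiniteCamera (P : Matrix (Fin 3) (Fin 4) ℝ) : Prop := IsUnit (leftBlock P).det

/-- Two cameras are coincident if their camera centers agree up to a nonzero scale;
for rank-3 cameras the center is the (one-dimensional) kernel, so this says the two
cameras share a common nonzero kernel vector. -/
def Coincident (P Q : Matrix (Fin 3) (Fin 4) ℝ) : Prop :=
  ∃ c : Fin 4 → ℝ, c ≠ 0 ∧ P.mulVec c = 0 ∧ Q.mulVec c = 0

/-- `u` is a nonzero scalar multiple of `v`. -/
def SimEq {n : ℕ} (u v : Fin n → ℝ) : Prop := ∃ c : ℝ, c ≠ 0 ∧ u = c • v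

/-- The skew-symmetric matrix `[v]ₓ` with `[v]ₓ w = v × w`. -/
def skew (v : Fin 3 → ℝ) : Matrix (Fin 3) (Fin 3) ℝ :=
  !![0, -v 2, v 1; v 2, 0, -v 0; -v 1, v 0, 0]

/-- `(x, y)` is `(A, b)`-irregular. -/
def Irregular (A : Matrix (Fin 3) (Fin 3) ℝ) (b : Fin 3 → ℝ) (x y : Fin 2 → ℝ) : Prop :=
  ((skew b * A).mulVec (hat x) = 0 ∧ Matrix.vecMul (hat y) (skew b) ≠ 0) ∨
  ((skew b * A).mulVec (hat x) ≠ 0 ∧ Matrix.vecMul (hat y) (skew b) = 0)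

/-! ### Auxiliary lemmas -/

lemma cam_mulVec (A : Matrix (Fin 3) (Fin 3) ℝ) (b u : Fin 3 → ℝ) (s : ℝ) :
    (cam A b) *ᵥ (Fin.snoc u s) = A *ᵥ u + s • b := by
  funext i
  simp [cam, mulVec, dotProduct, Fin.sum_univ_castSucc, mul_comm]
  rfl

lemma one_cam_mulVec (u : Fin 3 → ℝ) (s : ℝ) :
    (cam 1 0) *ᵥ (Fin.snoc u s) = u := by
  rw [cam_mulVec]; simp

lemma one_cam_mulVec_hat (u : Fin 3 → ℝ) : (cam 1 0) *ᵥ hat u = u := by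
  rw [hat, one_cam_mulVec]

lemma vecMul_cam (A : Matrix (Fin 3) (Fin 3) ℝ) (b y : Fin 3 → ℝ) :
    y ᵥ* (cam A b) = Fin.snoc (y ᵥ* A) (y ⬝ᵥ b) := by
  funext j
  refine Fin.lastCases ?_ (fun j => ?_) j <;>
    simp [cam, vecMul, dotProduct]
  rfl

lemma leftBlock_cam (A : Matrix (Fin 3) (Fin 3) ℝ) (b : Fin 3 → ℝ) :
    leftBlock (cam A b) = A := by
  ext i j; simp [leftBlock, cam]

lemma det_expand (A : Matrix (Fin 3) (Fin 3) ℝ) (b c : Fin 3 → ℝ) :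
    (Matrix.of fun i j => A i j + b i * c j).det = A.det + (adjugate A *ᵥ b) ⬝ᵥ c := by
  simp [Matrix.det_fin_three, Matrix.adjugate_fin_three, Matrix.mulVec, dotProduct,
    Fin.sum_univ_three]
  ring

/-- cross product -/
def cr (u v : Fin 3 → ℝ) : Fin 3 → ℝ :=
  ![u 1 * v 2 - u 2 * v 1, u 2 * v 0 - u 0 * v 2, u 0 * v 1 - u 1 * v 0]

lemma cr_dot_left (u v : Fin 3 → ℝ) : cr u v ⬝ᵥ u = 0 := by
  simp [cr, dotProduct, Fin.sum_univ_three]; ring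

lemma cr_dot_right (u v : Fin 3 → ℝ) : cr u v ⬝ᵥ v = 0 := by
  simp [cr, dotProduct, Fin.sum_univ_three]; ring

lemma exists_perp (u : Fin 3 → ℝ) : ∃ y : Fin 3 → ℝ, y ≠ 0 ∧ y ⬝ᵥ u = 0 := by
  by_cases h : u 0 = 0
  · refine ⟨![1, 0, 0], ?_, ?_⟩
    · intro hy; have := congrFun hy 0; simp at this
    · simp [dotProduct, Fin.sum_univ_three, h]
  · refine ⟨![u 1, -u 0, 0], ?_, ?_⟩
    · intro hy; have := congrFun hy 1; simp at this; exact h this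
    · simp [dotProduct, Fin.sum_univ_three]; ring

lemma parallel {u v : Fin 3 → ℝ} (h : cr u v = 0) (hu : u ≠ 0) : ∃ t : ℝ, v = t • u := by
  obtain ⟨k, hk⟩ := Function.ne_iff.mp hu
  have h0 := congrFun h 0
  have h1 := congrFun h 1
  have h2 := congrFun h 2
  simp [cr] at h0 h1 h2
  have hkk : u k ≠ 0 := by simpa using hk
  have key : ∀ a b : Fin 3, v a * u b = v b * u a := by
    intro a b
    fin_cases a <;> fin_cases b <;> simp only [Fin.reduceFinMk] <;>
      (first
        | ring1
        | (linear_combination h0)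
        | (linear_combination -h0)
        | (linear_combination h1)
        | (linear_combination -h1)
        | (linear_combination h2)
        | (linear_combination -h2))
  refine ⟨v k / u k, funext fun j => ?_⟩
  simp only [Pi.smul_apply, smul_eq_mul]
  field_simp
  linarith [key j k]

lemma adj_zero_cr {A : Matrix (Fin 3) (Fin 3) ℝ} (h : adjugate A = 0) (j k : Fin 3) :
    cr (fun i => A i j) (fun i => A i k) = 0 := by
  rw [Matrix.adjugate_fin_three] at h
  have e00 := congrFun (congrFun h 0) 0
  have e01 := congrFun (congrFun h 0) 1
  have e02 := congrFun (congrFun h 0) 2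
  have e10 := congrFun (congrFun h 1) 0
  have e11 := congrFun (congrFun h 1) 1
  have e12 := congrFun (congrFun h 1) 2
  have e20 := congrFun (congrFun h 2) 0
  have e21 := congrFun (congrFun h 2) 1
  have e22 := congrFun (congrFun h 2) 2
  simp at e00 e01 e02 e10 e11 e12 e20 e21 e22
  funext i
  fin_cases j <;> fin_cases k <;> fin_cases i <;>
    simp only [cr, Fin.reduceFinMk, Matrix.cons_val_zero, Matrix.cons_val_one, Matrix.head_cons,
      Matrix.cons_val_two, Matrix.tail_cons, Pi.zero_apply] <;>
    (first
      | ring1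
      | (linear_combination e00) | (linear_combination -e00)
      | (linear_combination e01) | (linear_combination -e01)
      | (linear_combination e02) | (linear_combination -e02)
      | (linear_combination e10) | (linear_combination -e10)
      | (linear_combination e11) | (linear_combination -e11)
      | (linear_combination e12) | (linear_combination -e12)
      | (linear_combination e20) | (linear_combination -e20)
      | (linear_combination e21) | (linear_combination -e21)
      | (linear_combination e22) | (linear_combination -e22))

lemma keyK (A : Matrix (Fin 3) (Fin 3) ℝ) (b : Fin 3 → ℝ)
    (hP2 : (cam A b).rank = 3) :
    A.det ≠ 0 ∨ adjugate A *ᵥ b ≠ 0 := by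
  by_contra hcon
  push_neg at hcon
  obtain ⟨hdet, hadj⟩ := hcon
  have hker : ∀ y : Fin 3 → ℝ, y ᵥ* (cam A b) = 0 → y = 0 := by
    intro y hy
    have hrk : ((cam A b)ᵀ).rank = 3 := by rw [Matrix.rank_transpose]; exact hP2
    have h2 : LinearMap.ker ((cam A b)ᵀ).mulVecLin = ⊥ := by
      have h1 := LinearMap.finrank_range_add_finrank_ker ((cam A b)ᵀ).mulVecLin
      have h3 : Module.finrank ℝ (Fin 3 → ℝ) = 3 := by simp
      have h4 : Module.finrank ℝ ↥(LinearMap.range ((cam A b)ᵀ).mulVecLin) = 3 := hrk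
      rw [h3, h4] at h1
      have h5 : Module.finrank ℝ ↥(LinearMap.ker ((cam A b)ᵀ).mulVecLin) = 0 := by omega
      exact Submodule.finrank_eq_zero.mp h5
    have hmem : ((cam A b)ᵀ).mulVecLin y = 0 := by
      rw [Matrix.mulVecLin_apply, Matrix.mulVec_transpose, hy]
    have : y ∈ LinearMap.ker ((cam A b)ᵀ).mulVecLin := LinearMap.mem_ker.mpr hmem
    rw [h2] at this
    simpa using this
  have key : ∀ y : Fin 3 → ℝ, y ≠ 0 → y ᵥ* A = 0 → y ⬝ᵥ b = 0 → False := by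
    intro y hy0 hyA hyb
    refine hy0 (hker y ?_)
    rw [vecMul_cam, hyA, hyb]
    funext j
    refine Fin.lastCases ?_ (fun j => ?_) j <;> simp
    rfl
  by_cases hA0 : adjugate A = 0
  · by_cases hA : A = 0
    · obtain ⟨y, hy0, hyb⟩ := exists_perp b
      exact key y hy0 (by simp [hA]) hyb
    · obtain ⟨p, hp⟩ := Function.ne_iff.mp hA
      obtain ⟨q, hq⟩ := Function.ne_iff.mp (show A p ≠ 0 by exact hp)
      have hq' : A p q ≠ 0 := by simpa using hq
      set colq : Fin 3 → ℝ := fun i => A i q with hcolq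
      have hcq : colq ≠ 0 := fun hc => hq' (by simpa [colq] using congrFun hc p)
      have perpA : ∀ y : Fin 3 → ℝ, y ⬝ᵥ colq = 0 → y ᵥ* A = 0 := by
        intro y hyq
        funext j
        obtain ⟨t, ht⟩ := parallel (adj_zero_cr hA0 q j) hcq
        have h5 : (y ᵥ* A) j = y ⬝ᵥ (fun i => A i j) := rfl
        rw [h5, ht, dotProduct_smul, hyq]
        simp
      by_cases hcb : cr colq b = 0
      · obtain ⟨t, htb⟩ := parallel hcb hcq
        obtain ⟨y, hy0, hyq⟩ := exists_perp colq
        exact key y hy0 (perpA y hyq) (by rw [htb, dotProduct_smul, hyq]; simp)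
      · exact key (cr colq b) hcb (perpA _ (cr_dot_left _ _)) (cr_dot_right _ _)
  · obtain ⟨p, hp⟩ := Function.ne_iff.mp hA0
    have hy0 : adjugate A p ≠ 0 := by exact hp
    refine key (adjugate A p) hy0 ?_ ?_
    · funext j
      have h6 : (adjugate A p ᵥ* A) j = (adjugate A * A) p j := by
        simp [Matrix.mul_apply, Matrix.vecMul, dotProduct]
      rw [h6, Matrix.adjugate_mul, hdet]
      simp
    · have h7 : adjugate A p ⬝ᵥ b = (adjugate A *ᵥ b) p := rfl
      rw [h7, hadj]
      simp

lemma generic {ι : Type*} [Fintype ι] (α : ι → ℝ) (w : ι → Fin 3 → ℝ)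
    (h : ∀ j, α j ≠ 0 ∨ w j ≠ 0) :
    ∃ c : Fin 3 → ℝ, ∀ j, α j + w j ⬝ᵥ c ≠ 0 := by
  classical
  set p : ι → MvPolynomial (Fin 3) ℝ :=
    fun j => MvPolynomial.C (α j) + ∑ k, MvPolynomial.C (w j k) * MvPolynomial.X k with hp
  have heval : ∀ (j : ι) (c : Fin 3 → ℝ), MvPolynomial.eval c (p j) = α j + w j ⬝ᵥ c := by
    intro j c
    simp [hp, dotProduct]
  have hpne : ∀ j, p j ≠ 0 := by
    intro j hj
    rcases h j with h0 | h0
    · have := heval j 0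
      rw [hj] at this
      simp [dotProduct] at this
      exact h0 this.symm
    · obtain ⟨k, hk⟩ := Function.ne_iff.mp h0
      have hk' : w j k ≠ 0 := by simpa using hk
      have := heval j (fun k' => if k' = k then (1 - α j) / w j k else 0)
      rw [hj] at this
      simp [dotProduct, Finset.mul_sum, mul_ite] at this
      rw [mul_comm, div_mul_cancel₀ _ hk'] at this
      linarith
  have hq : (∏ j, p j) ≠ 0 := Finset.prod_ne_zero_iff.mpr fun j _ => hpne j
  have hex : ∃ c : Fin 3 → ℝ, MvPolynomial.eval c (∏ j, p j) ≠ 0 := by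
    by_contra hcon
    push_neg at hcon
    exact hq (MvPolynomial.funext fun c => by simp [hcon c])
  obtain ⟨c, hc⟩ := hex
  refine ⟨c, fun j => ?_⟩
  rw [← heval]
  rw [map_prod] at hc
  exact Finset.prod_ne_zero_iff.mp hc j (Finset.mem_univ j)

lemma A'_step (A : Matrix (Fin 3) (Fin 3) ℝ) (b c u z : Fin 3 → ℝ) (s₀ e : ℝ)
    (he : e = s₀ - u ⬝ᵥ c) (hene : e ≠ 0)
    (hy : A *ᵥ u + s₀ • b = z) :
    (cam (Matrix.of fun i j => A i j + b i * c j) b) *ᵥ hat (e⁻¹ • u) = e⁻¹ • z := by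
  funext i
  rw [hat, cam_mulVec]
  have h2 := congrFun hy i
  simp only [Pi.add_apply, Pi.smul_apply, smul_eq_mul] at h2 ⊢
  have h1 : ((Matrix.of fun i j => A i j + b i * c j) *ᵥ (e⁻¹ • u)) i
      = e⁻¹ * ((A *ᵥ u) i + (u ⬝ᵥ c) * b i) := by
    show (∑ j, (A i j + b i * c j) * (e⁻¹ * u j))
        = e⁻¹ * ((∑ j, A i j * u j) + (∑ j, u j * c j) * b i)
    have hterm : ∀ j ∈ Finset.univ, (A i j + b i * c j) * (e⁻¹ * u j)
        = e⁻¹ * (A i j * u j) + (e⁻¹ * (u j * c j)) * b i := fun j _ => by ring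
    rw [Finset.sum_congr rfl hterm, Finset.sum_add_distrib, ← Finset.sum_mul,
      ← Finset.mul_sum, ← Finset.mul_sum]
    ring
  rw [h1, ← h2]
  have hd : u ⬝ᵥ c = s₀ - e := by rw [he]; ring
  rw [hd]
  field_simp
  ring

/-- As in the previous lemma, but if moreover `b ≠ 0` then the finite camera `P₂'` can be
chosen non-coincident with `P₁ = (I 0)`. -/
theorem stmt2 (m : ℕ) (x y : Fin m → Fin 2 → ℝ)
    (A : Matrix (Fin 3) (Fin 3) ℝ) (b : Fin 3 → ℝ)
    (hP2 : IsCamera (cam A b)) (hb : b ≠ 0)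
    (σ : Finset (Fin m)) (v : Fin m → Fin 3 → ℝ)
    (hσ : ∀ i ∈ σ, v i ≠ 0 ∧
      SimEq ((cam 1 0).mulVec (Fin.snoc (v i) 0)) (hat (x i)) ∧
      SimEq ((cam A b).mulVec (Fin.snoc (v i) 0)) (hat (y i)))
    (hσc : ∀ i ∉ σ,
      SimEq ((cam 1 0).mulVec (hat (v i))) (hat (x i)) ∧
      SimEq ((cam A b).mulVec (hat (v i))) (hat (y i))) :
    ∃ (P₂' : Matrix (Fin 3) (Fin 4) ℝ) (v' : Fin m → Fin 3 → ℝ),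
      IsFiniteCamera P₂' ∧ ¬ Coincident (cam 1 0) P₂' ∧ ∀ i,
        SimEq ((cam 1 0).mulVec (hat (v' i))) (hat (x i)) ∧
        SimEq (P₂'.mulVec (hat (v' i))) (hat (y i)) := by
  classical
  -- genericity data
  set αf : Option (Fin m) → ℝ :=
    fun j => j.elim A.det (fun i => if i ∈ σ then 0 else -1) with hαf
  set wf : Option (Fin m) → Fin 3 → ℝ := fun j => j.elim (adjugate A *ᵥ b) v with hwf
  have hcond : ∀ j, αf j ≠ 0 ∨ wf j ≠ 0 := by
    rintro (_ | i)
    · exact keyK A b hP2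
    · by_cases hi : i ∈ σ
      · right; simpa [hwf] using (hσ i hi).1
      · left; simp [hαf, hi]
  obtain ⟨c, hc⟩ := generic αf wf hcond
  have hdet : A.det + (adjugate A *ᵥ b) ⬝ᵥ c ≠ 0 := by simpa [hαf, hwf] using hc none
  have hwfs : ∀ i, wf (some i) = v i := fun i => rfl
  have hcσ : ∀ i ∈ σ, v i ⬝ᵥ c ≠ 0 := by
    intro i hi
    have h1 := hc (some i)
    rw [hwfs, show αf (some i) = 0 by rw [hαf]; simp [hi], zero_add] at h1
    exact h1
  have hcσc : ∀ i ∉ σ, (1 : ℝ) - v i ⬝ᵥ c ≠ 0 := by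
    intro i hi h0
    have h1 := hc (some i)
    rw [hwfs, show αf (some i) = -1 by rw [hαf]; simp [hi]] at h1
    apply h1
    linarith
  set A' : Matrix (Fin 3) (Fin 3) ℝ := Matrix.of (fun i j => A i j + b i * c j) with hA'
  -- the finite camera
  have hfin : IsFiniteCamera (cam A' b) := by
    rw [IsFiniteCamera, leftBlock_cam, isUnit_iff_ne_zero, hA', det_expand]
    exact hdet
  -- non-coincidence
  have hnc : ¬ Coincident (cam 1 0) (cam A' b) := by
    rintro ⟨d, hd0, h1, h2⟩
    have hinit : Fin.init d = 0 := by
      have h3 : (cam 1 0) *ᵥ d = Fin.init d := by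
        conv_lhs => rw [← Fin.snoc_init_self d]
        rw [one_cam_mulVec]
      rw [h3] at h1
      exact h1
    have h4 : (cam A' b) *ᵥ d = A' *ᵥ (Fin.init d) + d (Fin.last 3) • b := by
      conv_lhs => rw [← Fin.snoc_init_self d]
      rw [cam_mulVec]
    rw [h4, hinit, mulVec_zero, zero_add] at h2
    rcases smul_eq_zero.mp h2 with h | h
    · apply hd0
      funext j
      refine Fin.lastCases ?_ (fun j => ?_) j
      · exact h
      · exact congrFun hinit j
    · exact hb h
  -- the points
  set s₀ : Fin m → ℝ := fun i => if i ∈ σ then 0 else 1 with hs₀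
  set e : Fin m → ℝ := fun i => s₀ i - v i ⬝ᵥ c with he
  have hene : ∀ i, e i ≠ 0 := by
    intro i
    by_cases hi : i ∈ σ
    · intro h0
      rw [congrFun he i, show s₀ i = 0 by rw [hs₀]; simp [hi]] at h0
      exact hcσ i hi (by linarith)
    · intro h0
      rw [congrFun he i, show s₀ i = 1 by rw [hs₀]; simp [hi]] at h0
      exact hcσc i hi h0
  refine ⟨cam A' b, fun i => (e i)⁻¹ • v i, hfin, hnc, fun i => ?_⟩
  have hei : e i = s₀ i - v i ⬝ᵥ c := congrFun he i
  show SimEq ((cam 1 0) *ᵥ hat ((e i)⁻¹ • v i)) (hat (x i)) ∧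
    SimEq ((cam A' b) *ᵥ hat ((e i)⁻¹ • v i)) (hat (y i))
  by_cases hi : i ∈ σ
  · obtain ⟨hv0, ⟨c₁, hc₁, hx⟩, ⟨c₂, hc₂, hy⟩⟩ := hσ i hi
    rw [one_cam_mulVec] at hx
    rw [cam_mulVec] at hy
    constructor
    · refine ⟨(e i)⁻¹ * c₁, mul_ne_zero (inv_ne_zero (hene i)) hc₁, ?_⟩
      rw [one_cam_mulVec_hat, hx, smul_smul]
    · refine ⟨(e i)⁻¹ * c₂, mul_ne_zero (inv_ne_zero (hene i)) hc₂, ?_⟩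
      have hstep := A'_step A b c (v i) (c₂ • hat (y i)) (s₀ i) (e i) hei (hene i)
        (by rw [show s₀ i = 0 by simp [hs₀, hi]]; exact hy)
      rw [hA', hstep, smul_smul]
  · obtain ⟨⟨c₁, hc₁, hx⟩, ⟨c₂, hc₂, hy⟩⟩ := hσc i hi
    rw [one_cam_mulVec_hat] at hx
    rw [hat, cam_mulVec] at hy
    constructor
    · refine ⟨(e i)⁻¹ * c₁, mul_ne_zero (inv_ne_zero (hene i)) hc₁, ?_⟩
      rw [one_cam_mulVec_hat, hx, smul_smul]
    · refine ⟨(e i)⁻¹ * c₂, mul_ne_zero (inv_ne_zero (hene i)) hc₂, ?_⟩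
      have hstep := A'_step A b c (v i) (c₂ • hat (y i)) (s₀ i) (e i) hei (hene i)
        (by rw [show s₀ i = 1 by simp [hs₀, hi]]; exact hy)
      rw [hA', hstep, smul_smul]
end
end

section
/- Let (x_i, y_i) ∈ ℝ² × ℝ², i = 1,…,m, be given. The following are equivalent: (1) there exist NON-COINCIDENT cameras P₁, P₂ and points w_i ∈ ℝ⁴∖{0} forming a reconstruction of {(x_i,y_i)}; (2) there exist non-coincident finite cameras P₁, P₂ and points w_i ∈ ℝ⁴∖{0} forming a reconstruction; (3) there exist non-coincident finite cameras P₁, P₂ and points w_i ∈ ℝ³ such that (P₁,P₂,{ŵ_i}) is a reconstruction; (4) there exist a finite camera P₂ non-coincident with P₁ = (I 0) and points w_i ∈ ℝ³ such that (P₁,P₂,{ŵ_i}) is a reconstruction. -/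
open Matrix

noncomputable section

-- helper lemmas

@[simp] lemma snoc_three {α : Type*} (u : Fin 3 → α) (a : α) :
    @Fin.snoc 3 (fun _ => α) u a 3 = a :=
  Fin.snoc_last (α := fun _ => α) a u

lemma mulVec_eq_sum {m n : ℕ} (P : Matrix (Fin m) (Fin n) ℝ) (c : Fin n → ℝ) :
    P.mulVec c = ∑ j, c j • (fun i => P i j) := by
  ext i
  simp [Matrix.mulVec, dotProduct, Finset.sum_apply, mul_comm]

lemma cam_mulVec_s4 (A : Matrix (Fin 3) (Fin 3) ℝ) (b : Fin 3 → ℝ) (c : Fin 4 → ℝ) :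
    (cam A b).mulVec c = A.mulVec (fun j => c j.castSucc) + c (Fin.last 3) • b := by
  ext i
  simp only [Matrix.mulVec, dotProduct, cam, Matrix.of_apply, Pi.add_apply, Pi.smul_apply,
    smul_eq_mul]
  rw [Fin.sum_univ_castSucc]
  simp [mul_comm]

lemma cam_mulVec_hat (A : Matrix (Fin 3) (Fin 3) ℝ) (b : Fin 3 → ℝ) (w : Fin 3 → ℝ) :
    (cam A b).mulVec (hat w) = A.mulVec w + b := by
  rw [cam_mulVec_s4]
  simp [hat, Fin.snoc_castSucc]

lemma cam_leftBlock (P : Matrix (Fin 3) (Fin 4) ℝ) :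
    cam (leftBlock P) (fun i => P i (Fin.last 3)) = P := by
  ext i j
  refine Fin.lastCases ?_ ?_ j <;> simp [cam, leftBlock]

lemma leftBlock_mulVec (P : Matrix (Fin 3) (Fin 4) ℝ) (u : Fin 3 → ℝ) :
    (leftBlock P).mulVec u = P.mulVec (Fin.snoc u 0) := by
  ext i
  simp only [Matrix.mulVec, dotProduct, leftBlock, Matrix.submatrix_apply, id_eq]
  conv_rhs => rw [Fin.sum_univ_castSucc]
  simp

lemma isCamera_of_isFiniteCamera {P : Matrix (Fin 3) (Fin 4) ℝ} (h : IsFiniteCamera P) :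
    IsCamera P := by
  have hle : P.rank ≤ 3 := by
    simpa using P.rank_le_card_height
  have hE : P * (Matrix.of fun (j : Fin 4) (k : Fin 3) => if j = k.castSucc then (1:ℝ) else 0)
      = leftBlock P := by
    ext i k
    simp only [Matrix.mul_apply, Matrix.of_apply, leftBlock, Matrix.submatrix_apply, id_eq]
    rw [Finset.sum_eq_single k.castSucc] <;> simp +contextual
  have hge : (leftBlock P).rank ≤ P.rank := by
    rw [← hE]; exact Matrix.rank_mul_le_left _ _
  rw [Matrix.rank_of_isUnit _ ((Matrix.isUnit_iff_isUnit_det _).mpr h)] at hge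
  simpa [IsCamera] using le_antisymm hle (by simpa using hge)

lemma camera_kernel {P : Matrix (Fin 3) (Fin 4) ℝ} (h : IsCamera P) :
    ∃ c : Fin 4 → ℝ, c ≠ 0 ∧ P.mulVec c = 0 ∧
      ∀ d, P.mulVec d = 0 → ∃ t : ℝ, d = t • c := by
  have hrn := P.mulVecLin.finrank_range_add_finrank_ker
  rw [show Module.finrank ℝ (LinearMap.range P.mulVecLin) = P.rank from rfl] at hrn
  rw [h] at hrn
  simp only [Module.finrank_fintype_fun_eq_card, Fintype.card_fin] at hrn
  have hker : Module.finrank ℝ (LinearMap.ker P.mulVecLin) = 1 := by omega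
  rw [finrank_eq_one_iff'] at hker
  obtain ⟨v, hv0, hv⟩ := hker
  refine ⟨(v : Fin 4 → ℝ), ?_, v.2, ?_⟩
  · simpa using Subtype.coe_injective.ne hv0
  · intro d hd
    obtain ⟨t, ht⟩ := hv ⟨d, hd⟩
    exact ⟨t, by simpa using congrArg Subtype.val ht.symm⟩

lemma exists_dual (k : ℕ) (vs : Fin k → (Fin 4 → ℝ)) (hvs : ∀ j, vs j ≠ 0) :
    ∃ f : Fin 4 → ℝ, ∀ j, f ⬝ᵥ vs j ≠ 0 := by
  by_contra hcon
  push_neg at hcon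
  set φ : Fin k → ((Fin 4 → ℝ) →ₗ[ℝ] ℝ) := fun j =>
    { toFun := fun f => f ⬝ᵥ vs j
      map_add' := by intro a b; simp [add_dotProduct]
      map_smul' := by intro a b; simp [smul_dotProduct] } with hφ
  have hcover : ⋃ j, ((LinearMap.ker (φ j) : Subspace ℝ (Fin 4 → ℝ)) : Set (Fin 4 → ℝ))
      = Set.univ := by
    ext f
    simp only [Set.mem_iUnion, SetLike.mem_coe, LinearMap.mem_ker, Set.mem_univ, iff_true]
    obtain ⟨j, hj⟩ := hcon f
    exact ⟨j, hj⟩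
  obtain ⟨j, hj⟩ := Subspace.exists_eq_top_of_iUnion_eq_univ hcover
  obtain ⟨i, hi⟩ := Function.ne_iff.mp (hvs j)
  have : (Pi.single i 1 : Fin 4 → ℝ) ⬝ᵥ vs j = 0 := by
    have := LinearMap.ker_eq_top.mp hj
    exact congrFun (congrArg (fun g => g.toFun) this) (Pi.single i 1)
  rw [single_dotProduct] at this
  simp at this
  exact hi this


-- resume
lemma dotProduct_finsum {k : ℕ} (f : Fin 4 → ℝ) (g : Fin k → (Fin 4 → ℝ)) :
    f ⬝ᵥ (∑ j, g j) = ∑ j, f ⬝ᵥ g j := by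
  induction' k with k ih
  · simp
  · rw [Fin.sum_univ_castSucc, Fin.sum_univ_castSucc (f := fun j => f ⬝ᵥ g j),
      dotProduct_add, ih]

def dotL (f : Fin 4 → ℝ) : (Fin 4 → ℝ) →ₗ[ℝ] ℝ where
  toFun := fun v => f ⬝ᵥ v
  map_add' := by intro a b; simp [dotProduct_add]
  map_smul' := by intro a b; simp [dotProduct_smul]

lemma step13 {m : ℕ} {x y : Fin m → Fin 2 → ℝ}
    (h : ∃ P₁ P₂ : Matrix (Fin 3) (Fin 4) ℝ, IsCamera P₁ ∧ IsCamera P₂ ∧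
          ¬ Coincident P₁ P₂ ∧
          ∃ w : Fin m → Fin 4 → ℝ, ∀ i, w i ≠ 0 ∧
            SimEq (P₁.mulVec (w i)) (hat (x i)) ∧ SimEq (P₂.mulVec (w i)) (hat (y i))) :
    (∃ P₁ P₂ : Matrix (Fin 3) (Fin 4) ℝ, IsFiniteCamera P₁ ∧ IsFiniteCamera P₂ ∧
          ¬ Coincident P₁ P₂ ∧
          ∃ w : Fin m → Fin 3 → ℝ, ∀ i,
            SimEq (P₁.mulVec (hat (w i))) (hat (x i)) ∧
            SimEq (P₂.mulVec (hat (w i))) (hat (y i))) := by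
  obtain ⟨P₁, P₂, hC1, hC2, hNC, w, hw⟩ := h
  obtain ⟨c₁, hc₁0, hc₁k, hc₁s⟩ := camera_kernel hC1
  obtain ⟨c₂, hc₂0, hc₂k, hc₂s⟩ := camera_kernel hC2
  set vs : Fin (m + 2) → (Fin 4 → ℝ) := Fin.cons c₁ (Fin.cons c₂ (fun i => w i)) with hvs
  obtain ⟨f, hf⟩ := exists_dual (m + 2) vs (by
    refine Fin.cases ?_ ?_
    · simpa [hvs] using hc₁0
    · refine Fin.cases ?_ ?_
      · simpa [hvs] using hc₂0
      · intro i; simpa [hvs] using (hw i).1)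
  have hfc₁ : f ⬝ᵥ c₁ ≠ 0 := by simpa [hvs] using hf 0
  have hfc₂ : f ⬝ᵥ c₂ ≠ 0 := by simpa [hvs] using hf 1
  have hfw : ∀ i, f ⬝ᵥ w i ≠ 0 := by
    intro i; simpa [hvs] using hf i.succ.succ
  -- the kernel of dotting with f has dimension 3
  have hsurj : Function.Surjective (dotL f) := by
    intro r
    refine ⟨(r * (f ⬝ᵥ c₁)⁻¹) • c₁, ?_⟩
    simp only [dotL, LinearMap.coe_mk, AddHom.coe_mk, dotProduct_smul, smul_eq_mul]
    field_simp
  have hker3 : Module.finrank ℝ (LinearMap.ker (dotL f)) = 3 := by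
    have hrn := (dotL f).finrank_range_add_finrank_ker
    rw [LinearMap.range_eq_top.mpr hsurj, finrank_top] at hrn
    simp only [Module.finrank_self, Module.finrank_fintype_fun_eq_card, Fintype.card_fin] at hrn
    omega
  set b3 := Module.finBasisOfFinrankEq ℝ (LinearMap.ker (dotL f)) hker3 with hb3
  -- the change of coordinates matrix
  set col : Fin 4 → (Fin 4 → ℝ) := Fin.snoc (fun j => (b3 j : Fin 4 → ℝ)) c₁ with hcol
  set H : Matrix (Fin 4) (Fin 4) ℝ := Matrix.of fun i j => col j i with hH
  have hHmul : ∀ u : Fin 4 → ℝ, H.mulVec u = ∑ j, u j • col j := by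
    intro u
    rw [mulVec_eq_sum]
    rfl
  have hfcol : ∀ j : Fin 3, f ⬝ᵥ (b3 j : Fin 4 → ℝ) = 0 := by
    intro j
    have hmem := (b3 j).2
    rw [LinearMap.mem_ker] at hmem
    exact hmem
  have hF1 : ∀ u : Fin 4 → ℝ, f ⬝ᵥ (H.mulVec u) = u (Fin.last 3) * (f ⬝ᵥ c₁) := by
    intro u
    rw [hHmul, dotProduct_finsum]
    rw [Fin.sum_univ_castSucc]
    simp [hfcol, dotProduct_smul, hcol]
  have hB : ∀ u : Fin 3 → ℝ, (∑ j, u j • (b3 j : Fin 4 → ℝ)) = 0 → u = 0 := by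
    intro u hu
    have hcoe : ((∑ j, u j • b3 j : LinearMap.ker (dotL f)) : Fin 4 → ℝ)
        = ∑ j, u j • (b3 j : Fin 4 → ℝ) := by
      simp
    have hzero : (∑ j, u j • b3 j : LinearMap.ker (dotL f)) = 0 := by
      apply Subtype.ext
      rw [hcoe, hu]; rfl
    have := Fintype.linearIndependent_iff.mp b3.linearIndependent u hzero
    funext j; exact this j
  have hsnoc : ∀ u : Fin 3 → ℝ, H.mulVec (Fin.snoc u 0) = ∑ j, u j • (b3 j : Fin 4 → ℝ) := by
    intro u
    rw [hHmul, Fin.sum_univ_castSucc]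
    simp [hcol]
  -- injectivity of H
  have hK1 : ∀ u : Fin 4 → ℝ, H.mulVec u = 0 → u = 0 := by
    intro u hu
    have hlast : u (Fin.last 3) = 0 := by
      have := hF1 u
      rw [hu] at this
      simp only [dotProduct_zero] at this
      exact (mul_eq_zero.mp this.symm).resolve_right hfc₁
    have hu' : u = Fin.snoc (fun j : Fin 3 => u j.castSucc) 0 := by
      funext j
      refine Fin.lastCases ?_ ?_ j
      · simpa using hlast
      · intro j; simp
    rw [hu', hsnoc] at hu
    have := hB _ hu
    funext j
    refine Fin.lastCases ?_ ?_ j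
    · exact hlast
    · intro j; exact congrFun this j
  -- H is invertible
  have hHdet : IsUnit H.det := by
    rw [isUnit_iff_ne_zero]
    intro h0
    obtain ⟨v, hv0, hv⟩ := (Matrix.exists_mulVec_eq_zero_iff).mpr h0
    exact hv0 (hK1 v hv)
  -- finite cameras
  have hfin : ∀ P : Matrix (Fin 3) (Fin 4) ℝ, IsCamera P →
      (∀ c : Fin 4 → ℝ, c ≠ 0 → P.mulVec c = 0 → f ⬝ᵥ c ≠ 0) → IsFiniteCamera (P * H) := by
    intro P hP hPk
    rw [IsFiniteCamera, isUnit_iff_ne_zero]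
    intro h0
    obtain ⟨v, hv0, hv⟩ := (Matrix.exists_mulVec_eq_zero_iff).mpr h0
    rw [leftBlock_mulVec, ← Matrix.mulVec_mulVec] at hv
    set z := H.mulVec (Fin.snoc v 0) with hz
    have hzf : f ⬝ᵥ z = 0 := by
      rw [hz, hF1]
      simp
    have hz0 : z = 0 := by
      by_contra hz0
      exact (hPk z hz0 hv) hzf
    rw [hz, hsnoc] at hz0
    exact hv0 (hB v hz0)
  refine ⟨P₁ * H, P₂ * H, ?_, ?_, ?_, ?_⟩
  · refine hfin P₁ hC1 ?_
    intro c hc0 hck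
    obtain ⟨t, ht⟩ := hc₁s c hck
    have ht0 : t ≠ 0 := by
      intro h0; rw [h0, zero_smul] at ht; exact hc0 ht
    rw [ht, dotProduct_smul]
    simpa using mul_ne_zero ht0 hfc₁
  · refine hfin P₂ hC2 ?_
    intro c hc0 hck
    obtain ⟨t, ht⟩ := hc₂s c hck
    have ht0 : t ≠ 0 := by
      intro h0; rw [h0, zero_smul] at ht; exact hc0 ht
    rw [ht, dotProduct_smul]
    simpa using mul_ne_zero ht0 hfc₂
  · rintro ⟨c, hc0, h1, h2⟩
    rw [← Matrix.mulVec_mulVec] at h1 h2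
    exact hNC ⟨H.mulVec c, fun h => hc0 (hK1 c h), h1, h2⟩
  · -- the new points
    set w' : Fin m → Fin 4 → ℝ := fun i => H⁻¹.mulVec (w i) with hw'
    have hHw' : ∀ i, H.mulVec (w' i) = w i := by
      intro i
      rw [hw', Matrix.mulVec_mulVec, Matrix.mul_nonsing_inv _ hHdet, Matrix.one_mulVec]
    have ht : ∀ i, w' i (Fin.last 3) ≠ 0 := by
      intro i h0
      have := hF1 (w' i)
      rw [hHw' i, h0, zero_mul] at this
      exact hfw i this
    refine ⟨fun i j => (w' i (Fin.last 3))⁻¹ * w' i j.castSucc, fun i => ?_⟩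
    have hhat : hat (fun j => (w' i (Fin.last 3))⁻¹ * w' i j.castSucc)
        = (w' i (Fin.last 3))⁻¹ • w' i := by
      funext j
      refine Fin.lastCases ?_ ?_ j
      · simp [hat, inv_mul_cancel₀ (show w' i 3 ≠ 0 from ht i)]
      · intro j; simp [hat]
    have key : ∀ P : Matrix (Fin 3) (Fin 4) ℝ,
        (P * H).mulVec (hat (fun j => (w' i (Fin.last 3))⁻¹ * w' i j.castSucc))
        = (w' i (Fin.last 3))⁻¹ • P.mulVec (w i) := by
      intro P
      rw [hhat, Matrix.mulVec_smul, ← Matrix.mulVec_mulVec, hHw' i]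
    constructor
    · obtain ⟨t, ht0, hts⟩ := (hw i).2.1
      refine ⟨(w' i (Fin.last 3))⁻¹ * t, mul_ne_zero (inv_ne_zero (ht i)) ht0, ?_⟩
      rw [key P₁, hts, smul_smul]
    · obtain ⟨t, ht0, hts⟩ := (hw i).2.2
      refine ⟨(w' i (Fin.last 3))⁻¹ * t, mul_ne_zero (inv_ne_zero (ht i)) ht0, ?_⟩
      rw [key P₂, hts, smul_smul]

lemma step34 {m : ℕ} {x y : Fin m → Fin 2 → ℝ}
    (h : ∃ P₁ P₂ : Matrix (Fin 3) (Fin 4) ℝ, IsFiniteCamera P₁ ∧ IsFiniteCamera P₂ ∧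
          ¬ Coincident P₁ P₂ ∧
          ∃ w : Fin m → Fin 3 → ℝ, ∀ i,
            SimEq (P₁.mulVec (hat (w i))) (hat (x i)) ∧
            SimEq (P₂.mulVec (hat (w i))) (hat (y i))) :
    (∃ P₂ : Matrix (Fin 3) (Fin 4) ℝ, IsFiniteCamera P₂ ∧
          ¬ Coincident (cam 1 0) P₂ ∧
          ∃ w : Fin m → Fin 3 → ℝ, ∀ i,
            SimEq ((cam 1 0).mulVec (hat (w i))) (hat (x i)) ∧
            SimEq (P₂.mulVec (hat (w i))) (hat (y i))) := by
  obtain ⟨P₁, P₂, hf1, hf2, hNC, w, hw⟩ := h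
  set A₁ := leftBlock P₁ with hA₁
  set b₁ : Fin 3 → ℝ := fun i => P₁ i (Fin.last 3) with hb₁
  set A₂ := leftBlock P₂ with hA₂
  set b₂ : Fin 3 → ℝ := fun i => P₂ i (Fin.last 3) with hb₂
  have hP₁ : P₁ = cam A₁ b₁ := (cam_leftBlock P₁).symm
  have hP₂ : P₂ = cam A₂ b₂ := (cam_leftBlock P₂).symm
  have hd₁ : IsUnit A₁.det := hf1
  have hd₂ : IsUnit A₂.det := hf2
  have hcancel : ∀ v, A₁.mulVec (A₁⁻¹.mulVec v) = v := by
    intro v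
    rw [Matrix.mulVec_mulVec, Matrix.mul_nonsing_inv _ hd₁, Matrix.one_mulVec]
  set B := A₂ * A₁⁻¹ with hBdef
  have hBA : B * A₁ = A₂ := by
    rw [hBdef, Matrix.mul_assoc, Matrix.nonsing_inv_mul _ hd₁, Matrix.mul_one]
  set Q₂ := cam B (b₂ - B.mulVec b₁) with hQ₂
  have hQfin : IsFiniteCamera Q₂ := by
    rw [IsFiniteCamera, hQ₂, leftBlock_cam, hBdef, Matrix.det_mul]
    exact hd₂.mul (Matrix.isUnit_nonsing_inv_det _ hd₁)
  refine ⟨Q₂, hQfin, ?_, fun i => A₁.mulVec (w i) + b₁, fun i => ?_⟩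
  · rintro ⟨c, hc0, h1, h2⟩
    set c' : Fin 3 → ℝ := fun j => c j.castSucc with hc'
    set c₃ := c (Fin.last 3) with hc₃
    set d : Fin 4 → ℝ :=
      Fin.snoc (A₁⁻¹.mulVec c' - c₃ • A₁⁻¹.mulVec b₁) c₃ with hd
    have hdcast : (fun j : Fin 3 => d j.castSucc) = A₁⁻¹.mulVec c' - c₃ • A₁⁻¹.mulVec b₁ := by
      funext j; simp [hd]
    have hdlast : d (Fin.last 3) = c₃ := by simp [hd]
    have h1' : c' = 0 := by
      have := h1
      rw [cam_mulVec_s4] at this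
      simpa [Matrix.one_mulVec, ← hc'] using this
    have hP₁d : P₁.mulVec d = 0 := by
      rw [hP₁, cam_mulVec_s4, hdcast, hdlast, Matrix.mulVec_sub, Matrix.mulVec_smul,
        hcancel, hcancel, h1']
      simp
    have hP₂d : P₂.mulVec d = 0 := by
      have h2' := h2
      rw [hQ₂, cam_mulVec_s4, ← hc', ← hc₃] at h2'
      rw [hP₂, cam_mulVec_s4, hdcast, hdlast, Matrix.mulVec_sub, Matrix.mulVec_smul,
        Matrix.mulVec_mulVec, Matrix.mulVec_mulVec, ← hBdef]
      calc B.mulVec c' - c₃ • B.mulVec b₁ + c₃ • b₂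
          = B.mulVec c' + c₃ • (b₂ - B.mulVec b₁) := by
            simp only [smul_sub]; abel
        _ = 0 := h2'
    have hd0 : d ≠ 0 := by
      intro h0
      apply hc0
      have hc₃0 : c₃ = 0 := by rw [← hdlast, h0]; rfl
      have : A₁⁻¹.mulVec c' - c₃ • A₁⁻¹.mulVec b₁ = 0 := by
        rw [← hdcast, h0]; rfl
      rw [hc₃0, zero_smul, sub_zero] at this
      have hc'0 : c' = 0 := by
        rw [← hcancel c', this, Matrix.mulVec_zero]
      funext j
      refine Fin.lastCases ?_ ?_ j
      · simpa [hc₃] using hc₃0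
      · intro j
        have := congrFun hc'0 j
        simpa [hc'] using this
    exact hNC ⟨d, hd0, hP₁d, hP₂d⟩
  · have hkey1 : (cam 1 0).mulVec (hat (A₁.mulVec (w i) + b₁)) = P₁.mulVec (hat (w i)) := by
      rw [cam_mulVec_hat, hP₁, cam_mulVec_hat]
      simp [Matrix.one_mulVec]
    have hkey2 : Q₂.mulVec (hat (A₁.mulVec (w i) + b₁)) = P₂.mulVec (hat (w i)) := by
      rw [hQ₂, cam_mulVec_hat, hP₂, cam_mulVec_hat, Matrix.mulVec_add,
        Matrix.mulVec_mulVec, hBA]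
      abel
    exact ⟨by rw [hkey1]; exact (hw i).1, by rw [hkey2]; exact (hw i).2⟩

lemma step43 {m : ℕ} {x y : Fin m → Fin 2 → ℝ}
    (h : ∃ P₂ : Matrix (Fin 3) (Fin 4) ℝ, IsFiniteCamera P₂ ∧
          ¬ Coincident (cam 1 0) P₂ ∧
          ∃ w : Fin m → Fin 3 → ℝ, ∀ i,
            SimEq ((cam 1 0).mulVec (hat (w i))) (hat (x i)) ∧
            SimEq (P₂.mulVec (hat (w i))) (hat (y i))) :
    (∃ P₁ P₂ : Matrix (Fin 3) (Fin 4) ℝ, IsFiniteCamera P₁ ∧ IsFiniteCamera P₂ ∧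
          ¬ Coincident P₁ P₂ ∧
          ∃ w : Fin m → Fin 3 → ℝ, ∀ i,
            SimEq (P₁.mulVec (hat (w i))) (hat (x i)) ∧
            SimEq (P₂.mulVec (hat (w i))) (hat (y i))) := by
  obtain ⟨P₂, hf2, hNC, w, hw⟩ := h
  exact ⟨cam 1 0, P₂, by rw [IsFiniteCamera, leftBlock_cam]; simp, hf2, hNC, w, hw⟩

lemma step32 {m : ℕ} {x y : Fin m → Fin 2 → ℝ}
    (h : ∃ P₁ P₂ : Matrix (Fin 3) (Fin 4) ℝ, IsFiniteCamera P₁ ∧ IsFiniteCamera P₂ ∧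
          ¬ Coincident P₁ P₂ ∧
          ∃ w : Fin m → Fin 3 → ℝ, ∀ i,
            SimEq (P₁.mulVec (hat (w i))) (hat (x i)) ∧
            SimEq (P₂.mulVec (hat (w i))) (hat (y i))) :
    (∃ P₁ P₂ : Matrix (Fin 3) (Fin 4) ℝ, IsFiniteCamera P₁ ∧ IsFiniteCamera P₂ ∧
          ¬ Coincident P₁ P₂ ∧
          ∃ w : Fin m → Fin 4 → ℝ, ∀ i, w i ≠ 0 ∧
            SimEq (P₁.mulVec (w i)) (hat (x i)) ∧ SimEq (P₂.mulVec (w i)) (hat (y i))) := by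
  obtain ⟨P₁, P₂, hf1, hf2, hNC, w, hw⟩ := h
  refine ⟨P₁, P₂, hf1, hf2, hNC, fun i => hat (w i), fun i => ⟨?_, (hw i).1, (hw i).2⟩⟩
  intro h0
  have := congrFun h0 (Fin.last 3)
  simp [hat] at this

lemma step21 {m : ℕ} {x y : Fin m → Fin 2 → ℝ}
    (h : ∃ P₁ P₂ : Matrix (Fin 3) (Fin 4) ℝ, IsFiniteCamera P₁ ∧ IsFiniteCamera P₂ ∧
          ¬ Coincident P₁ P₂ ∧
          ∃ w : Fin m → Fin 4 → ℝ, ∀ i, w i ≠ 0 ∧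
            SimEq (P₁.mulVec (w i)) (hat (x i)) ∧ SimEq (P₂.mulVec (w i)) (hat (y i))) :
    (∃ P₁ P₂ : Matrix (Fin 3) (Fin 4) ℝ, IsCamera P₁ ∧ IsCamera P₂ ∧
          ¬ Coincident P₁ P₂ ∧
          ∃ w : Fin m → Fin 4 → ℝ, ∀ i, w i ≠ 0 ∧
            SimEq (P₁.mulVec (w i)) (hat (x i)) ∧ SimEq (P₂.mulVec (w i)) (hat (y i))) := by
  obtain ⟨P₁, P₂, hf1, hf2, hNC, w, hw⟩ := h
  exact ⟨P₁, P₂, isCamera_of_isFiniteCamera hf1, isCamera_of_isFiniteCamera hf2, hNC, w, hw⟩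


/-- The four versions of the projective reconstruction problem with NON-COINCIDENT
cameras are equivalent. -/
theorem stmt4 (m : ℕ) (x y : Fin m → Fin 2 → ℝ) :
    List.TFAE
      [ (∃ P₁ P₂ : Matrix (Fin 3) (Fin 4) ℝ, IsCamera P₁ ∧ IsCamera P₂ ∧
          ¬ Coincident P₁ P₂ ∧
          ∃ w : Fin m → Fin 4 → ℝ, ∀ i, w i ≠ 0 ∧
            SimEq (P₁.mulVec (w i)) (hat (x i)) ∧ SimEq (P₂.mulVec (w i)) (hat (y i))),
        (∃ P₁ P₂ : Matrix (Fin 3) (Fin 4) ℝ, IsFiniteCamera P₁ ∧ IsFiniteCamera P₂ ∧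
          ¬ Coincident P₁ P₂ ∧
          ∃ w : Fin m → Fin 4 → ℝ, ∀ i, w i ≠ 0 ∧
            SimEq (P₁.mulVec (w i)) (hat (x i)) ∧ SimEq (P₂.mulVec (w i)) (hat (y i))),
        (∃ P₁ P₂ : Matrix (Fin 3) (Fin 4) ℝ, IsFiniteCamera P₁ ∧ IsFiniteCamera P₂ ∧
          ¬ Coincident P₁ P₂ ∧
          ∃ w : Fin m → Fin 3 → ℝ, ∀ i,
            SimEq (P₁.mulVec (hat (w i))) (hat (x i)) ∧
            SimEq (P₂.mulVec (hat (w i))) (hat (y i))),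
        (∃ P₂ : Matrix (Fin 3) (Fin 4) ℝ, IsFiniteCamera P₂ ∧
          ¬ Coincident (cam 1 0) P₂ ∧
          ∃ w : Fin m → Fin 3 → ℝ, ∀ i,
            SimEq ((cam 1 0).mulVec (hat (w i))) (hat (x i)) ∧
            SimEq (P₂.mulVec (hat (w i))) (hat (y i))) ] := by
  tfae_have 1 → 3 := step13
  tfae_have 3 → 4 := step34
  tfae_have 4 → 3 := step43
  tfae_have 3 → 2 := step32
  tfae_have 2 → 1 := step21
  tfae_finish
end
end
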